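/- (Existence of a quantization covariance solving the matrix equation in the proof of Theorem 3) Let Σ and C be n×n complex Hermitian matrices with C positive definite and Σ − C positive definite (so 0 ≺ C ≺ Σ). Then there exists an n×n Hermitian positive definite matrix K such that Σ^{1/2} K^{1/2} (Σ + K)^{-1} K^{1/2} Σ^{1/2} = C, where M^{1/2} denotes the unique positive semidefinite square root of a positive semidefinite matrix M (note Σ + K is positive definite, hence invertible). -/

import Mathlib

open Matrix
open scoped ComplexOrder

/-- The positive semidefinite square root of a positive semidefinite matrix
(the definition `Matrix.PosSemidef.sqrt` of the older Mathlib, since removed). -/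
noncomputable def Matrix.PosSemidef.sqrt {n 𝕜 : Type*} [Fintype n] [DecidableEq n] [RCLike 𝕜]
    {A : Matrix n n 𝕜} (hA : A.PosSemidef) : Matrix n n 𝕜 :=
  hA.1.eigenvectorUnitary.1 * diagonal ((↑) ∘ (√·) ∘ hA.1.eigenvalues) *
  (star hA.1.eigenvectorUnitary : Matrix n n 𝕜)

open scoped MatrixOrder in
lemma Matrix.PosSemidef.sqrt_eq_cfcSqrt {n : ℕ} {A : Matrix (Fin n) (Fin n) ℂ}
    (hA : A.PosSemidef) : hA.sqrt = CFC.sqrt A := by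
  rw [CFC.sqrt_eq_real_sqrt A hA.nonneg, cfcₙ_eq_cfc (hf0 := Real.sqrt_zero), hA.1.cfc_eq]
  simp [Matrix.PosSemidef.sqrt, IsHermitian.cfc, Unitary.conjStarAlgAut_apply, Function.comp_def]

open scoped MatrixOrder in
lemma Matrix.PosSemidef.sqrt_mul_self {n : ℕ} {A : Matrix (Fin n) (Fin n) ℂ}
    (hA : A.PosSemidef) : hA.sqrt * hA.sqrt = A := by
  rw [hA.sqrt_eq_cfcSqrt, CFC.sqrt_mul_sqrt_self A hA.nonneg]

open scoped MatrixOrder in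
lemma Matrix.PosSemidef.posSemidef_sqrt {n : ℕ} {A : Matrix (Fin n) (Fin n) ℂ}
    (hA : A.PosSemidef) : hA.sqrt.PosSemidef := by
  rw [hA.sqrt_eq_cfcSqrt]
  exact (CFC.sqrt_nonneg A).posSemidef

open scoped MatrixOrder in
lemma Matrix.PosSemidef.eq_sqrt_of_sq_eq {n : ℕ} {A B : Matrix (Fin n) (Fin n) ℂ}
    (hA : A.PosSemidef) (hB : B.PosSemidef) (hAB : A ^ 2 = B) : A = hB.sqrt := by
  rw [hB.sqrt_eq_cfcSqrt]
  exact (CFC.sqrt_unique (by rw [← sq, hAB]) hA.nonneg).symm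

/-- Congruence of a positive definite matrix by an invertible Hermitian matrix
is positive definite. -/
lemma posDef_herm_conj {n : ℕ} {A B : Matrix (Fin n) (Fin n) ℂ}
    (hA : A.PosDef) (hB : B.IsHermitian) (hU : IsUnit B) :
    (B * A * B).PosDef := by
  have h : (Bᴴ * A * B).PosDef := by
    have hinj : Function.Injective B.mulVec := Matrix.mulVec_injective_iff_isUnit.mpr hU
    exact hA.conjTranspose_mul_mul_same hinj
  rwa [hB.eq] at h

/-- A positive semidefinite matrix with invertible determinant is positive definite. -/
lemma posDef_of_posSemidef_isUnit {n : ℕ} {A : Matrix (Fin n) (Fin n) ℂ}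
    (hA : A.PosSemidef) (h : IsUnit A.det) : A.PosDef := by
  have hdet : IsUnit hA.sqrt.det := by
    have hmul : hA.sqrt.det * hA.sqrt.det = A.det := by
      rw [← Matrix.det_mul, hA.sqrt_mul_self]
    exact isUnit_of_mul_isUnit_left (hmul.symm ▸ h)
  have h2 := posDef_herm_conj (Matrix.PosDef.one) hA.posSemidef_sqrt.1
    ((Matrix.isUnit_iff_isUnit_det _).mpr hdet)
  rwa [Matrix.mul_one, hA.sqrt_mul_self] at h2

/-- The square root of a positive definite matrix is positive definite. -/
lemma sqrt_posDef {n : ℕ} {A : Matrix (Fin n) (Fin n) ℂ}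
    (hA : A.PosDef) (h : A.PosSemidef) : h.sqrt.PosDef := by
  refine posDef_of_posSemidef_isUnit h.posSemidef_sqrt ?_
  have hmul : h.sqrt.det * h.sqrt.det = A.det := by
    rw [← Matrix.det_mul, h.sqrt_mul_self]
  exact isUnit_of_mul_isUnit_left
    (hmul.symm ▸ (Matrix.isUnit_iff_isUnit_det A).mp hA.isUnit)

/-- **Existence of a quantization covariance (matrix equation in the proof of Theorem 3).**
If `Σ` and `C` are Hermitian with `C` positive definite and `Σ - C` positive definite
(so `0 ≺ C ≺ Σ`; in particular `Σ` is positive semidefinite, which we record as the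
derivable hypothesis `hSig` in order to form its square root), then there is a Hermitian
positive definite `K` with `Σ^{1/2} K^{1/2} (Σ + K)⁻¹ K^{1/2} Σ^{1/2} = C`. -/
theorem exists_quantization_covariance
    {n : ℕ} (Sig C : Matrix (Fin n) (Fin n) ℂ)
    (hSigHerm : Sig.IsHermitian) (hCHerm : C.IsHermitian)
    (hC : C.PosDef) (hSC : (Sig - C).PosDef)
    (hSig : Sig.PosSemidef) :
    ∃ (K : Matrix (Fin n) (Fin n) ℂ) (hK : K.PosDef),
      hSig.sqrt * hK.posSemidef.sqrt * (Sig + K)⁻¹ * hK.posSemidef.sqrt * hSig.sqrt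
        = C := by
  classical
  have hSigPD : Sig.PosDef := by
    have h := hSC.add hC
    rwa [sub_add_cancel] at h
  haveI instC : Invertible C := hC.isUnit.invertible
  set s := hSig.sqrt with hs_def
  have hsPD : s.PosDef := sqrt_posDef hSigPD hSig
  have hss : s * s = Sig := hSig.sqrt_mul_self
  haveI instS : Invertible s := hsPD.isUnit.invertible
  have hsinvH : (s⁻¹).IsHermitian := hsPD.1.inv
  have hsinvU : IsUnit s⁻¹ := Matrix.isUnit_nonsing_inv_iff.mpr hsPD.isUnit
  -- the congruence of C by s⁻¹
  set W := s⁻¹ * C * s⁻¹ with hW_def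
  have hW : W.PosDef := posDef_herm_conj hC hsinvH hsinvU
  haveI instW : Invertible W := hW.isUnit.invertible
  have h1 : s⁻¹ * Sig * s⁻¹ = 1 := by
    rw [← hss, Matrix.inv_mul_cancel_left_of_invertible, Matrix.mul_inv_of_invertible]
  have h1W : (1 - W).PosDef := by
    have h2 := posDef_herm_conj hSC hsinvH hsinvU
    rwa [Matrix.mul_sub, Matrix.sub_mul, h1, ← hW_def] at h2
  have hWinv : W⁻¹ = s * (C⁻¹ * s) := by
    rw [hW_def, Matrix.mul_inv_rev, Matrix.mul_inv_rev, Matrix.inv_inv_of_invertible]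
  -- D := s C⁻¹ s - 1 = W⁻¹ - 1 is positive definite
  set D := s * (C⁻¹ * s) - 1 with hD_def
  have hD : D.PosDef := by
    have hWi : W⁻¹.PosDef := hW.inv
    set w := hWi.posSemidef.sqrt with hw_def
    have hwPD : w.PosDef := sqrt_posDef hWi hWi.posSemidef
    have hww : w * w = W⁻¹ := hWi.posSemidef.sqrt_mul_self
    haveI instw : Invertible w := hwPD.isUnit.invertible
    have hWe : W = w⁻¹ * w⁻¹ := by
      rw [← Matrix.mul_inv_rev, hww, Matrix.inv_inv_of_invertible]
    have hwWw : w * W * w = 1 := by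
      rw [hWe, Matrix.mul_inv_cancel_left_of_invertible, Matrix.inv_mul_of_invertible]
    have key : w * (1 - W) * w = D := by
      rw [Matrix.mul_sub, Matrix.sub_mul, Matrix.mul_one, hww, hwWw, hD_def, hWinv]
    have h3 := posDef_herm_conj h1W hwPD.1 hwPD.isUnit
    rwa [key] at h3
  have hD1 : D + 1 = s * (C⁻¹ * s) := by rw [hD_def, sub_add_cancel]
  have hD1PD : (D + 1).PosDef := by
    rw [hD1, ← Matrix.mul_assoc]
    exact posDef_herm_conj hC.inv hsPD.1 hsPD.isUnit
  haveI instD1 : Invertible (D + 1) := hD1PD.isUnit.invertible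
  -- construct X with X * D * X = Sig
  have hDps := hD.posSemidef
  set d := hDps.sqrt with hd_def
  have hdPD : d.PosDef := sqrt_posDef hD hDps
  have hdd : d * d = D := hDps.sqrt_mul_self
  haveI instd : Invertible d := hdPD.isUnit.invertible
  have hdinvH : (d⁻¹).IsHermitian := hdPD.1.inv
  have hdinvU : IsUnit d⁻¹ := Matrix.isUnit_nonsing_inv_iff.mpr hdPD.isUnit
  have hE : (d * Sig * d).PosDef := posDef_herm_conj hSigPD hdPD.1 hdPD.isUnit
  set e := hE.posSemidef.sqrt with he_def
  have hePD : e.PosDef := sqrt_posDef hE hE.posSemidef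
  have hee : e * e = d * Sig * d := hE.posSemidef.sqrt_mul_self
  haveI inste : Invertible e := hePD.isUnit.invertible
  set X := d⁻¹ * e * d⁻¹ with hX_def
  have hX : X.PosDef := posDef_herm_conj hePD hdinvH hdinvU
  haveI instX : Invertible X := hX.isUnit.invertible
  have hK : (X * X).PosDef := by
    have h4 := posDef_herm_conj (Matrix.PosDef.one) hX.1 hX.isUnit
    rwa [Matrix.mul_one] at h4
  refine ⟨X * X, hK, ?_⟩
  have hXs : X = hK.posSemidef.sqrt :=
    hX.posSemidef.eq_sqrt_of_sq_eq hK.posSemidef (by rw [sq])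
  rw [← hXs]
  have hXDX : X * D * X = Sig := by
    rw [hX_def, ← hdd]
    calc d⁻¹ * e * d⁻¹ * (d * d) * (d⁻¹ * e * d⁻¹)
        = d⁻¹ * (e * e) * d⁻¹ := by
          simp only [Matrix.mul_assoc, Matrix.inv_mul_cancel_left_of_invertible,
            Matrix.mul_inv_cancel_left_of_invertible]
      _ = d⁻¹ * (d * Sig * d) * d⁻¹ := by rw [hee]
      _ = Sig := by
          simp only [Matrix.mul_assoc, Matrix.inv_mul_cancel_left_of_invertible,
            Matrix.mul_inv_of_invertible, Matrix.mul_one]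
  have hSigK : Sig + X * X = X * (D + 1) * X := by
    rw [Matrix.mul_add, Matrix.mul_one, Matrix.add_mul, hXDX]
  have hinvD1 : (D + 1)⁻¹ = s⁻¹ * (C * s⁻¹) := by
    rw [hD1, Matrix.mul_inv_rev, Matrix.mul_inv_rev, Matrix.inv_inv_of_invertible,
      Matrix.mul_assoc]
  have hinv3 : (X * (D + 1) * X)⁻¹ = X⁻¹ * ((D + 1)⁻¹ * X⁻¹) := by
    rw [Matrix.mul_inv_rev (X * (D + 1)) X, Matrix.mul_inv_rev X (D + 1)]
  rw [hSigK, hinv3, hinvD1]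
  simp only [Matrix.mul_assoc, Matrix.mul_inv_cancel_left_of_invertible,
    Matrix.inv_mul_cancel_left_of_invertible, Matrix.mul_inv_of_invertible,
    Matrix.inv_mul_of_invertible, Matrix.mul_one, Matrix.one_mul]
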